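/- arXiv:2001.08919 — 2 statements merged into one kernel-verified Lean document; each statement's English description precedes it below -/
import Mathlib

section
/- Let ν, δ ∈ (0,1) with ν + δ ≤ 1/6, let p be a real number with 1 − δ ≤ p ≤ 1, let ξ : {1, 2, 3, …} → {0, 1}, and let k₀ be a positive integer such that |(1/m)·∑_{j=1}^m ξ_j − p| ≤ ν for every integer m ≥ k₀. Then for every integer k ≥ k₀ there exists an integer n with k ≤ n ≤ (1 + 3(ν + δ))·k and ξ_n = 1. -/
open MeasureTheory Filter Set
open scoped ENNReal Pointwise Topology NNReal

noncomputable section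

/-- The Euclidean plane. -/
abbrev Plane : Type := EuclideanSpace ℝ (Fin 2)

/-- The point of the plane with given coordinates. -/
def pt (a b : ℝ) : Plane := WithLp.toLp 2 ![a, b]

/-- The Voronoi cell of the point `i` for the set of nuclei `N`. -/
def cell (N : Set Plane) (i : Plane) : Set Plane := {x | ∀ j ∈ N, dist x i ≤ dist x j}

/-- `i` and `j` are Delaunay neighbours: distinct points of `N` whose Voronoi cells share a
common edge (an infinite intersection). -/
def Nbr (N : Set Plane) (i j : Plane) : Prop :=
  i ∈ N ∧ j ∈ N ∧ i ≠ j ∧ (cell N i ∩ cell N j).Infinite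

/-- A Voronoi edge: the common edge of the cells of two Delaunay neighbours. -/
def IsEdge (N : Set Plane) (e : Set Plane) : Prop :=
  ∃ i j, Nbr N i j ∧ e = cell N i ∩ cell N j

/-- A Voronoi vertex: a point lying in at least three distinct Voronoi cells. -/
def IsVertex (N : Set Plane) (x : Plane) : Prop :=
  ∃ i j k, i ∈ N ∧ j ∈ N ∧ k ∈ N ∧ i ≠ j ∧ i ≠ k ∧ j ≠ k ∧
    x ∈ cell N i ∧ x ∈ cell N j ∧ x ∈ cell N k

/-- The set of Voronoi edges. -/
def edges (N : Set Plane) : Set (Set Plane) := {e | IsEdge N e}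

/-- The set `N*` of Voronoi vertices. -/
def vertices (N : Set Plane) : Set Plane := {x | IsVertex N x}

/-- `v` is a point of `V` at minimal distance from `x` (a possible value of the projection). -/
def IsNearestIn (V : Set Plane) (x v : Plane) : Prop :=
  v ∈ V ∧ ∀ w ∈ V, dist x v ≤ dist x w

/-- A non-self-intersecting path formed by `K` segments, each belonging to the family of
segments `E`, joining `a` to `b`. -/
structure EdgePath (E : Set (Set Plane)) (a b : Plane) (K : ℕ) where
  pts : Fin (K + 1) → Plane
  first_eq : pts 0 = a
  last_eq : pts (Fin.last K) = b
  edge_mem : ∀ k : Fin K, segment ℝ (pts k.castSucc) (pts k.succ) ∈ E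
  nonself : ∀ k l : Fin K, k < l →
    ∀ z ∈ segment ℝ (pts k.castSucc) (pts k.succ) ∩ segment ℝ (pts l.castSucc) (pts l.succ),
      (k : ℕ) + 1 = (l : ℕ) ∧ z = pts l.castSucc

/-- The trace of a path: the union of its segments. -/
def pathPoints {E : Set (Set Plane)} {a b : Plane} {K : ℕ} (p : EdgePath E a b K) : Set Plane :=
  ⋃ k : Fin K, segment ℝ (p.pts k.castSucc) (p.pts k.succ)

/-- The generalized grid distance: the minimal number of segments of a path of edges from `E`
joining a point of `V` nearest to `x` with a point of `V` nearest to `y`; `⊤` if there is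
no such path. -/
def mdist (E : Set (Set Plane)) (V : Set Plane) (x y : Plane) : ℕ∞ :=
  sInf {n : ℕ∞ | ∃ (K : ℕ) (a b : Plane), n = (K : ℕ∞) ∧
    IsNearestIn V x a ∧ IsNearestIn V y b ∧ Nonempty (EdgePath E a b K)}

/-- The chemical distance `m₀` on the Voronoi graph of `N`. -/
def m0 (N : Set Plane) (x y : Plane) : ℕ∞ := mdist (edges N) (vertices N) x y

/-- A set of points of the plane is locally finite iff its intersection with every bounded set
is finite. -/
def LocFin (N : Set Plane) : Prop := ∀ R : ℝ, (N ∩ Metric.closedBall 0 R).Finite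

/-- `N` is a Poisson random set of intensity `1` on `(Ω, P)`: it is a.s. locally finite, the
number of its points in a bounded Borel set `B` is a measurable Poisson random variable with
parameter `|B|`, and the counts in pairwise disjoint bounded Borel sets are independent. -/
def IsPoisson {Ω : Type*} [MeasurableSpace Ω] (P : Measure Ω) (N : Ω → Set Plane) : Prop :=
  (∀ᵐ ω ∂P, LocFin (N ω)) ∧
  (∀ B : Set Plane, MeasurableSet B → Bornology.IsBounded B →
    Measurable (fun ω => (N ω ∩ B).ncard) ∧
    ∀ n : ℕ, P {ω | (N ω ∩ B).ncard = n} =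
      ENNReal.ofReal (Real.exp (-(volume B).toReal) * (volume B).toReal ^ n / n.factorial)) ∧
  (∀ (m : ℕ) (B : Fin m → Set Plane), (∀ i, MeasurableSet (B i)) →
    (∀ i, Bornology.IsBounded (B i)) → (Pairwise fun i j => Disjoint (B i) (B j)) →
    ProbabilityTheory.iIndepFun (fun i ω => (N ω ∩ B i).ncard) P)

/-- `T` is a jointly measurable, measure-preserving, ergodic action of `ℝ²` on `Ω` under which
the random set `N` is stationary: `N (T x ω) = N ω − x`. -/
def IsErgodicDS {Ω : Type*} [MeasurableSpace Ω] (P : Measure Ω) (N : Ω → Set Plane)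
    (T : Plane → Ω → Ω) : Prop :=
  (∀ x, MeasurePreserving (T x) P P) ∧
  Measurable (fun q : Plane × Ω => T q.1 q.2) ∧
  (∀ ω, T 0 ω = ω) ∧ (∀ x y ω, T x (T y ω) = T (x + y) ω) ∧
  (∀ x ω, N (T x ω) = (fun p => p - x) '' N ω) ∧
  (∀ A : Set Ω, MeasurableSet A → (∀ x, T x ⁻¹' A = A) → P A = 0 ∨ P A = 1)

/-- `u` is a spin function for the scaled point set `ε • N`: it takes values `±1` there. -/
def IsSpin (N : Set Plane) (ε : ℝ) (u : Plane → ℤ) : Prop := ∀ i ∈ ε • N, u i = 1 ∨ u i = -1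

/-- The scaled ferromagnetic energy
`E_ε(u) = ε · #{(i,j) ∈ ε𝒩 × ε𝒩 : i/ε, j/ε Delaunay neighbours, u i = 1, u j = −1}`. -/
def energy (N : Set Plane) (ε : ℝ) (u : Plane → ℤ) : ℝ≥0∞ :=
  ENNReal.ofReal ε *
    ({p : Plane × Plane | p.1 ∈ ε • N ∧ p.2 ∈ ε • N ∧ Nbr N (ε⁻¹ • p.1) (ε⁻¹ • p.2) ∧
      u p.1 = 1 ∧ u p.2 = -1}.encard : ℝ≥0∞)

/-- The Voronoi set of a spin function: `V_ε(u) = ⋃ {ε C_{i/ε} : i ∈ ε𝒩, u i = 1}`. -/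
def vorSet (N : Set Plane) (ε : ℝ) (u : Plane → ℤ) : Set Plane :=
  ⋃ i ∈ {j : Plane | j ∈ ε • N ∧ u j = 1}, ε • cell N (ε⁻¹ • i)

/-- Convergence of a sequence of spin functions to a set `A`: local `L¹` convergence of the
indicator functions of the associated Voronoi sets to the indicator function of `A`. -/
def SeqConv (N : Set Plane) (ε : ℕ → ℝ) (u : ℕ → Plane → ℤ) (A : Set Plane) : Prop :=
  ∀ R : ℝ, 0 < R →
    Tendsto (fun n => volume (symmDiff (vorSet N (ε n) (u n)) A ∩ Metric.closedBall 0 R))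
      atTop (nhds 0)

/-- Convergence, as `ε → 0⁺`, of a family of spin functions to a set `A`: local `L¹`
convergence of the indicator functions of the associated Voronoi sets to that of `A`. -/
def FamConv (N : Set Plane) (u : ℝ → Plane → ℤ) (A : Set Plane) : Prop :=
  ∀ R : ℝ, 0 < R →
    Tendsto (fun ε => volume (symmDiff (vorSet N ε (u ε)) A ∩ Metric.closedBall 0 R))
      (nhdsWithin 0 (Set.Ioi 0)) (nhds 0)

/-- The set `𝒩⁰_α` of centres of regular Voronoi cells: the cell contains a ball of radius
`α`, has diameter at most `1/α`, and has at most `1/α` Delaunay neighbours. -/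
def regular (N : Set Plane) (α : ℝ) : Set Plane :=
  {i | i ∈ N ∧ (∃ c, Metric.closedBall c α ⊆ cell N i) ∧
    EMetric.diam (cell N i) ≤ ENNReal.ofReal (1 / α) ∧
    ({j | Nbr N i j}.encard : ℝ≥0∞) ≤ ENNReal.ofReal (1 / α)}

/-- `j` can be reached from `i` by a path in `S` whose consecutive points are Delaunay
neighbours for `N`. -/
def Reach (N S : Set Plane) (i j : Plane) : Prop :=
  ∃ (K : ℕ) (c : Fin (K + 1) → Plane), c 0 = i ∧ c (Fin.last K) = j ∧
    (∀ k, c k ∈ S) ∧ ∀ k : Fin K, Nbr N (c k.castSucc) (c k.succ)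

/-- `C` is an infinite connected component of `S` in the Delaunay graph of `N`. -/
def IsInfComponent (N S C : Set Plane) : Prop :=
  (∃ i ∈ S, C = {j | Reach N S i j}) ∧ C.Infinite

/-- The edges of the Voronoi cells with centres in `S` (the set `𝒱_α` when `S = 𝒩_α`). -/
def edgesOf (N S : Set Plane) : Set (Set Plane) :=
  {e | ∃ i ∈ S, ∃ j, Nbr N i j ∧ e = cell N i ∩ cell N j}

/-- The endpoints (extreme points) of the edges in `edgesOf N S` (the set `𝒩*_α`). -/
def verticesOf (N S : Set Plane) : Set Plane :=
  {x | ∃ e ∈ edgesOf N S, x ∈ Set.extremePoints ℝ e}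

/-- The chemical distance `m_α` on the cluster `S` of regular cells. -/
def mAlpha (N S : Set Plane) (x y : Plane) : ℕ∞ :=
  mdist (edgesOf N S) (verticesOf N S) x y

/-- The polyomino `𝐀(P)` of the unit squares of the grid `ℤ²` meeting the set `P`. -/
def gridA (P : Set Plane) : Set (ℤ × ℤ) :=
  {z | ∃ x ∈ P, |x 0 - z.1| ≤ 1 / 2 ∧ |x 1 - z.2| ≤ 1 / 2}

/-- The vector `ν^⊥` obtained rotating `ν` by `π/2`. -/
def perp (ν : Plane) : Plane := pt (-(ν 1)) (ν 0)

/-- The rectangle `R^ν_{T,δ}(x)` centred at `x`, of width `2δT` in the direction `ν` and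
length `T` in the direction `ν^⊥`. -/
def rect (x ν : Plane) (T δ : ℝ) : Set Plane :=
  {y | |(inner ℝ (y - x) ν : ℝ)| ≤ δ * T ∧ |(inner ℝ (y - x) (perp ν) : ℝ)| ≤ T / 2}

/-- The side of `R^ν_{T,δ}(x)` parallel to `ν` at signed distance `s` in direction `ν^⊥`. -/
def rectSide (x ν : Plane) (T δ : ℝ) (s : ℝ) : Set Plane :=
  {y | |(inner ℝ (y - x) ν : ℝ)| ≤ δ * T ∧ (inner ℝ (y - x) (perp ν) : ℝ) = s}

/-- Deterministic lemma on `{0,1}`-valued sequences: if the averages of `ξ` over the first `m`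
terms (`m ≥ k₀`) are within `ν` of `p ∈ [1−δ, 1]` and `ν + δ ≤ 1/6`, then every window
`[k, (1+3(ν+δ))k]` with `k ≥ k₀` contains an index `n` with `ξ n = 1`. -/
theorem statement_13 (ν δ : ℝ) (hν0 : 0 < ν) (hν1 : ν < 1) (hδ0 : 0 < δ) (hδ1 : δ < 1)
    (hsum : ν + δ ≤ 1 / 6) (p : ℝ) (hp1 : 1 - δ ≤ p) (hp2 : p ≤ 1)
    (ξ : ℕ → ℕ) (hξ : ∀ j : ℕ, 1 ≤ j → ξ j = 0 ∨ ξ j = 1)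
    (k₀ : ℕ) (hk₀ : 0 < k₀)
    (havg : ∀ m : ℕ, k₀ ≤ m →
      |(1 / (m : ℝ)) * ∑ j ∈ Finset.Icc 1 m, (ξ j : ℝ) - p| ≤ ν) :
    ∀ k : ℕ, k₀ ≤ k → ∃ n : ℕ, k ≤ n ∧ (n : ℝ) ≤ (1 + 3 * (ν + δ)) * (k : ℝ) ∧ ξ n = 1 := by
  intro k hk
  by_contra hcon
  push_neg at hcon
  set θ : ℝ := ν + δ with hθ
  have hk1 : 1 ≤ k := le_trans hk₀ hk
  have hθ0 : 0 < θ := by positivity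
  have hkr : (1 : ℝ) ≤ k := by exact_mod_cast hk1
  have hcoef : (k : ℝ) ≤ (1 + 3 * θ) * k := by nlinarith
  have hcoef0 : (0:ℝ) ≤ (1 + 3 * θ) * k := le_trans (by positivity) hcoef
  set M : ℕ := ⌊(1 + 3 * θ) * (k : ℝ)⌋₊ with hM
  have hkM : k ≤ M := Nat.le_floor hcoef
  have hMk₀ : k₀ ≤ M := le_trans hk hkM
  have hMlt : (1 + 3 * θ) * (k : ℝ) < M + 1 := Nat.lt_floor_add_one _
  have hMle : (M : ℝ) ≤ (1 + 3 * θ) * (k : ℝ) := Nat.floor_le hcoef0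
  -- ξ n = 0 for k ≤ n ≤ M
  have hzero : ∀ n : ℕ, k ≤ n → n ≤ M → ξ n = 0 := by
    intro n hn hnM
    have hnr : (n : ℝ) ≤ (1 + 3 * θ) * (k : ℝ) :=
      le_trans (Nat.cast_le.mpr hnM) hMle
    rcases hξ n (le_trans hk1 hn) with h0 | h1
    · exact h0
    · exact absurd h1 (hcon n hn hnr)
  -- sum bound
  have hsumle : ∑ j ∈ Finset.Icc 1 M, ξ j ≤ k - 1 := by
    calc ∑ j ∈ Finset.Icc 1 M, ξ j ≤ ∑ j ∈ Finset.Icc 1 M, (if j < k then 1 else 0) := by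
          apply Finset.sum_le_sum
          intro j hj
          simp only [Finset.mem_Icc] at hj
          by_cases hjk : j < k
          · simp only [hjk, if_true]
            rcases hξ j hj.1 with h | h <;> omega
          · simp only [hjk, if_false]
            have := hzero j (by omega) hj.2
            omega
      _ = k - 1 := by
          have heq : Finset.filter (fun j => j < k) (Finset.Icc 1 M) = Finset.Icc 1 (k-1) := by
            ext j
            simp only [Finset.mem_filter, Finset.mem_Icc]
            omega
          rw [← Finset.sum_filter, heq, Finset.sum_const, smul_eq_mul, mul_one, Nat.card_Icc]
          omega
  have hsumr : ∑ j ∈ Finset.Icc 1 M, (ξ j : ℝ) ≤ (k : ℝ) - 1 := by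
    have h2 : (∑ j ∈ Finset.Icc 1 M, ξ j) + 1 ≤ k := by omega
    have h3 : ((∑ j ∈ Finset.Icc 1 M, ξ j : ℕ) : ℝ) + 1 ≤ (k : ℝ) := by exact_mod_cast h2
    push_cast at h3
    linarith
  -- average bound
  have hM1 : (1 : ℝ) ≤ M := by exact_mod_cast le_trans hk1 hkM
  have hMpos : (0 : ℝ) < M := by linarith
  have havgM := havg M hMk₀
  rw [abs_le] at havgM
  have hlow : (p - ν) * M ≤ ∑ j ∈ Finset.Icc 1 M, (ξ j : ℝ) := by
    have h := havgM.1
    have : p - ν ≤ (1 / (M : ℝ)) * ∑ j ∈ Finset.Icc 1 M, (ξ j : ℝ) := by linarith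
    calc (p - ν) * M ≤ ((1 / (M : ℝ)) * ∑ j ∈ Finset.Icc 1 M, (ξ j : ℝ)) * M :=
          mul_le_mul_of_nonneg_right this (le_of_lt hMpos)
      _ = ∑ j ∈ Finset.Icc 1 M, (ξ j : ℝ) := by
          field_simp
  -- combine: (1-θ) M ≤ sum ≤ k - 1, and (1+3θ)k - 1 < M
  nlinarith [mul_le_mul_of_nonneg_right (show (1 : ℝ) - θ ≤ p - ν by simp [hθ]; linarith)
      (le_of_lt hMpos),
    mul_lt_mul_of_pos_left (show (1 + 3 * θ) * (k:ℝ) - 1 < M by linarith)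
      (show (0:ℝ) < 1 - θ by linarith),
    mul_le_mul_of_nonneg_left hkr (le_of_lt hθ0)]


end
end

section
/- Let N ⊆ ℝ² be locally finite and nonempty, let L > 0, let j', j'' ∈ ℤ² with |j' − j''| = 1, set Q_{5L} = [−5L, 5L]² and U = (Q_{5L} + 10L·j') ∪ (Q_{5L} + 10L·j''). Assume that every grid square L·(z + [0,1]²) with z ∈ ℤ² that intersects U contains a point of N. Then every Voronoi cell C_p (p ∈ N) that intersects the segment joining 10L·j' to 10L·j'' is contained in U. -/
open MeasureTheory Filter Set
open scoped ENNReal Pointwise Topology NNReal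

noncomputable section

lemma my_halfspace_convex (p j : Plane) : Convex ℝ {x : Plane | dist x p ≤ dist x j} := by
  have h : {x : Plane | dist x p ≤ dist x j} =
      {x : Plane | 2 * (inner ℝ x (j - p) : ℝ) ≤ ‖j‖ ^ 2 - ‖p‖ ^ 2} := by
    ext x
    simp only [Set.mem_setOf_eq, dist_eq_norm]
    rw [← Real.sqrt_sq (norm_nonneg (x - p)), ← Real.sqrt_sq (norm_nonneg (x - j)),
      Real.sqrt_le_sqrt_iff (by positivity)]
    rw [@norm_sub_sq_real, @norm_sub_sq_real, inner_sub_right]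
    constructor <;> intro h <;> nlinarith
  rw [h]
  exact convex_halfSpace_le ⟨fun a b => by rw [inner_add_left]; ring,
    fun c a => by rw [real_inner_smul_left]; simp [smul_eq_mul]; ring⟩ _

lemma my_cell_convex (N : Set Plane) (p : Plane) : Convex ℝ (cell N p) := by
  have h : cell N p = ⋂ j ∈ N, {x : Plane | dist x p ≤ dist x j} := by
    ext x; simp [cell]
  rw [h]
  exact convex_iInter fun j => convex_iInter fun _ => my_halfspace_convex p j

lemma my_claimA_real (L a1 a2 b1 b2 x1 x2 w1 w2 s : ℝ) (hL : 0 < L)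
    (hadjR : (b1 = a1 ∧ (b2 = a2 + 10*L ∨ a2 = b2 + 10*L)) ∨
             (b2 = a2 ∧ (b1 = a1 + 10*L ∨ a1 = b1 + 10*L)))
    (hs0 : 0 ≤ s) (hs1 : s ≤ 1)
    (hx1 : x1 = a1 + s*(b1 - a1)) (hx2 : x2 = a2 + s*(b2 - a2))
    (hw1 : |w1 - x1| < 5*L) (hw2 : |w2 - x2| < 5*L) :
    (|w1 - a1| ≤ 5*L ∧ |w2 - a2| ≤ 5*L) ∨ (|w1 - b1| ≤ 5*L ∧ |w2 - b2| ≤ 5*L) := by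
  rw [abs_lt] at hw1 hw2
  have h1 : 0 ≤ s*L := mul_nonneg hs0 hL.le
  have h2 : s*L ≤ L := by nlinarith
  rcases hadjR with ⟨he, hd | hd⟩ | ⟨he, hd | hd⟩ <;> subst he <;> subst hd
  · rcases le_or_gt w2 (a2 + 5*L) with h | h
    · left; constructor <;> rw [abs_le] <;> constructor <;> nlinarith
    · right; constructor <;> rw [abs_le] <;> constructor <;> nlinarith
  · rcases le_or_gt w2 (b2 + 5*L) with h | h
    · right; constructor <;> rw [abs_le] <;> constructor <;> nlinarith
    · left; constructor <;> rw [abs_le] <;> constructor <;> nlinarith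
  · rcases le_or_gt w1 (a1 + 5*L) with h | h
    · left; constructor <;> rw [abs_le] <;> constructor <;> nlinarith
    · right; constructor <;> rw [abs_le] <;> constructor <;> nlinarith
  · rcases le_or_gt w1 (b1 + 5*L) with h | h
    · right; constructor <;> rw [abs_le] <;> constructor <;> nlinarith
    · left; constructor <;> rw [abs_le] <;> constructor <;> nlinarith

lemma my_coord_dist_le (w x : Plane) (i : Fin 2) : |w i - x i| ≤ dist w x := by
  rw [EuclideanSpace.dist_eq, ← Real.sqrt_sq (abs_nonneg (w i - x i)), sq_abs]
  apply Real.sqrt_le_sqrt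
  rw [Fin.sum_univ_two]
  simp only [Real.dist_eq, sq_abs]
  fin_cases i <;> simp <;> nlinarith [sq_nonneg (w 0 - x 0), sq_nonneg (w 1 - x 1)]

lemma my_escape {U C : Set Plane} (hUc : IsClosed U) (hC : Convex ℝ C)
    {x y : Plane} (hx : x ∈ C) (hy : y ∈ C) (hxU : x ∈ U) (hyU : y ∉ U)
    {L : ℝ} (hL : 0 < L) :
    ∃ z w : Plane, z ∈ C ∧ z ∈ U ∧ w ∉ U ∧ dist w z < L := by
  set f : ℝ → Plane := fun t => (1 - t) • x + t • y with hf
  have hfc : Continuous f := by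
    apply Continuous.add
    · exact (continuous_const.sub continuous_id).smul continuous_const
    · exact continuous_id.smul continuous_const
  have hf0 : f 0 = x := by simp [hf]
  have hf1 : f 1 = y := by simp [hf]
  set S : Set ℝ := Set.Icc (0:ℝ) 1 ∩ f ⁻¹' U with hS
  have hS0 : (0:ℝ) ∈ S := ⟨⟨le_refl 0, zero_le_one⟩, by simp only [Set.mem_preimage, hf0]; exact hxU⟩
  have hbdd : BddAbove S := ⟨1, fun t ht => ht.1.2⟩
  have hcl : IsClosed S := isClosed_Icc.inter (hUc.preimage hfc)
  have hmem : sSup S ∈ S := hcl.csSup_mem ⟨0, hS0⟩ hbdd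
  set t := sSup S with htdef
  have ht1 : t ≤ 1 := hmem.1.2
  have ht0 : 0 ≤ t := hmem.1.1
  have htlt : t < 1 := by
    rcases eq_or_lt_of_le ht1 with h | h
    · exact absurd (by rw [← hf1, ← h]; exact hmem.2) hyU
    · exact h
  have hd : 0 ≤ dist y x := dist_nonneg
  set d := dist y x with hddef
  set δ := L / (2 * (d + 1)) with hδdef
  have hδ : 0 < δ := by rw [hδdef]; positivity
  set t' := min 1 (t + δ) with ht'def
  have htt' : t < t' := lt_min htlt (by linarith)
  have ht'1 : t' ≤ 1 := min_le_left _ _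
  have ht'd : t' ≤ t + δ := min_le_right _ _
  have ht'S : t' ∉ S := fun h => absurd (le_csSup hbdd h) (not_le.2 htt')
  have ht'U : f t' ∉ U := fun h => ht'S ⟨⟨by linarith, ht'1⟩, h⟩
  have hztC : f t ∈ C := hC hx hy (by linarith) ht0 (by ring)
  refine ⟨f t, f t', hztC, hmem.2, ht'U, ?_⟩
  have heq : f t' - f t = (t' - t) • (y - x) := by rw [hf]; simp only; module
  rw [dist_eq_norm, heq, norm_smul, Real.norm_eq_abs, abs_of_nonneg (by linarith)]
  have hn : ‖y - x‖ = d := (dist_eq_norm y x).symm ▸ rfl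
  rw [hn]
  have hkey : δ * (2 * (d + 1)) = L := by rw [hδdef]; field_simp
  nlinarith [mul_nonneg (le_of_lt hδ) hd]


/-- Claim (s1) in the proof of the channel property: if every grid square of size `L` meeting
`U = (Q_{5L} + 10Lj') ∪ (Q_{5L} + 10Lj'')` contains a point of the locally finite set `N`,
then every Voronoi cell meeting the segment from `10Lj'` to `10Lj''` is contained in `U`. -/
theorem statement_15 (N : Set Plane) (hN : LocFin N) (hne : N.Nonempty)
    (L : ℝ) (hL : 0 < L) (j' j'' : ℤ × ℤ)
    (hadj : (j'.1 - j''.1) ^ 2 + (j'.2 - j''.2) ^ 2 = 1)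
    (U : Set Plane)
    (hU : U = {x : Plane | |x 0 - 10 * L * (j'.1 : ℝ)| ≤ 5 * L ∧
                           |x 1 - 10 * L * (j'.2 : ℝ)| ≤ 5 * L} ∪
              {x : Plane | |x 0 - 10 * L * (j''.1 : ℝ)| ≤ 5 * L ∧
                           |x 1 - 10 * L * (j''.2 : ℝ)| ≤ 5 * L})
    (hfill : ∀ z : ℤ × ℤ,
      ({x : Plane | L * (z.1 : ℝ) ≤ x 0 ∧ x 0 ≤ L * ((z.1 : ℝ) + 1) ∧
                    L * (z.2 : ℝ) ≤ x 1 ∧ x 1 ≤ L * ((z.2 : ℝ) + 1)} ∩ U).Nonempty →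
      (N ∩ {x : Plane | L * (z.1 : ℝ) ≤ x 0 ∧ x 0 ≤ L * ((z.1 : ℝ) + 1) ∧
                        L * (z.2 : ℝ) ≤ x 1 ∧ x 1 ≤ L * ((z.2 : ℝ) + 1)}).Nonempty) :
    ∀ p ∈ N,
      (cell N p ∩ segment ℝ (pt (10 * L * (j'.1 : ℝ)) (10 * L * (j'.2 : ℝ)))
          (pt (10 * L * (j''.1 : ℝ)) (10 * L * (j''.2 : ℝ)))).Nonempty →
      cell N p ⊆ U := by
  intro p hp ⟨x, hxc, hxseg⟩
  have hproj : ∀ i : Fin 2, Continuous fun z : Plane => z i := fun i =>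
    (EuclideanSpace.proj i : Plane →L[ℝ] ℝ).continuous
  have hUc : IsClosed U := by
    rw [hU]
    apply IsClosed.union <;>
    · rw [show ∀ c c' : ℝ, {x : Plane | |x 0 - c| ≤ 5*L ∧ |x 1 - c'| ≤ 5*L} =
        {x : Plane | |x 0 - c| ≤ 5*L} ∩ {x : Plane | |x 1 - c'| ≤ 5*L} from
        fun c c' => rfl]
      exact IsClosed.inter
        (isClosed_le (continuous_abs.comp ((hproj 0).sub continuous_const)) continuous_const)
        (isClosed_le (continuous_abs.comp ((hproj 1).sub continuous_const)) continuous_const)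
  have hnear : ∀ z ∈ U, ∃ q ∈ N, dist z q ≤ 2*L := by
    intro z hz
    have h1 : (⌊z 0 / L⌋ : ℝ) ≤ z 0 / L := Int.floor_le _
    have h2 : z 0 / L < ⌊z 0 / L⌋ + 1 := Int.lt_floor_add_one _
    have h3 : (⌊z 1 / L⌋ : ℝ) ≤ z 1 / L := Int.floor_le _
    have h4 : z 1 / L < ⌊z 1 / L⌋ + 1 := Int.lt_floor_add_one _
    have e1 : L * (⌊z 0 / L⌋ : ℝ) ≤ z 0 := by rw [mul_comm]; exact (le_div_iff₀ hL).mp h1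
    have e2 : z 0 ≤ L * ((⌊z 0 / L⌋ : ℝ) + 1) := by
      rw [mul_comm]; exact le_of_lt ((div_lt_iff₀ hL).mp h2)
    have e3 : L * (⌊z 1 / L⌋ : ℝ) ≤ z 1 := by rw [mul_comm]; exact (le_div_iff₀ hL).mp h3
    have e4 : z 1 ≤ L * ((⌊z 1 / L⌋ : ℝ) + 1) := by
      rw [mul_comm]; exact le_of_lt ((div_lt_iff₀ hL).mp h4)
    obtain ⟨q, hqN, hq⟩ := hfill (⌊z 0 / L⌋, ⌊z 1 / L⌋) ⟨z, ⟨e1, e2, e3, e4⟩, hz⟩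
    refine ⟨q, hqN, ?_⟩
    obtain ⟨f1, f2, f3, f4⟩ := hq
    have hde : dist z q = Real.sqrt ((z 0 - q 0)^2 + (z 1 - q 1)^2) := by
      rw [EuclideanSpace.dist_eq, Fin.sum_univ_two]
      simp [Real.dist_eq, sq_abs]
    rw [hde]
    have hsq : (z 0 - q 0)^2 + (z 1 - q 1)^2 ≤ (2*L)^2 := by nlinarith
    calc Real.sqrt ((z 0 - q 0)^2 + (z 1 - q 1)^2) ≤ Real.sqrt ((2*L)^2) :=
          Real.sqrt_le_sqrt hsq
      _ = 2*L := Real.sqrt_sq (by positivity)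
  obtain ⟨u, v, hu, hv, huv, hx⟩ := hxseg
  have hx0 : x 0 = u * (10 * L * (j'.1 : ℝ)) + v * (10 * L * (j''.1 : ℝ)) := by
    rw [← hx]; simp [pt]
  have hx1 : x 1 = u * (10 * L * (j'.2 : ℝ)) + v * (10 * L * (j''.2 : ℝ)) := by
    rw [← hx]; simp [pt]
  have hx0' : x 0 = 10 * L * (j'.1 : ℝ) + v * (10 * L * (j''.1 : ℝ) - 10 * L * (j'.1 : ℝ)) := by
    linear_combination hx0 + (10 * L * (j'.1 : ℝ)) * huv
  have hx1' : x 1 = 10 * L * (j'.2 : ℝ) + v * (10 * L * (j''.2 : ℝ) - 10 * L * (j'.2 : ℝ)) := by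
    linear_combination hx1 + (10 * L * (j'.2 : ℝ)) * huv
  have hv1 : v ≤ 1 := by linarith
  have hcases : (j''.1 = j'.1 ∧ (j''.2 = j'.2 + 1 ∨ j'.2 = j''.2 + 1)) ∨
      (j''.2 = j'.2 ∧ (j''.1 = j'.1 + 1 ∨ j'.1 = j''.1 + 1)) := by
    have hb1 : -1 ≤ j'.1 - j''.1 := by nlinarith [sq_nonneg (j'.1 - j''.1 + 1), sq_nonneg (j'.2 - j''.2)]
    have hb2 : j'.1 - j''.1 ≤ 1 := by nlinarith [sq_nonneg (j'.1 - j''.1 - 1), sq_nonneg (j'.2 - j''.2)]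
    have hb3 : -1 ≤ j'.2 - j''.2 := by nlinarith [sq_nonneg (j'.2 - j''.2 + 1), sq_nonneg (j'.1 - j''.1)]
    have hb4 : j'.2 - j''.2 ≤ 1 := by nlinarith [sq_nonneg (j'.2 - j''.2 - 1), sq_nonneg (j'.1 - j''.1)]
    have t1 : j'.1 - j''.1 = -1 ∨ j'.1 - j''.1 = 0 ∨ j'.1 - j''.1 = 1 := by omega
    have t2 : j'.2 - j''.2 = -1 ∨ j'.2 - j''.2 = 0 ∨ j'.2 - j''.2 = 1 := by omega
    rcases t1 with h1 | h1 | h1 <;> rcases t2 with h2 | h2 | h2 <;>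
      rw [h1, h2] at hadj <;> norm_num at hadj <;> omega
  have hadjR : (10 * L * (j''.1 : ℝ) = 10 * L * (j'.1 : ℝ) ∧
      (10 * L * (j''.2 : ℝ) = 10 * L * (j'.2 : ℝ) + 10*L ∨
       10 * L * (j'.2 : ℝ) = 10 * L * (j''.2 : ℝ) + 10*L)) ∨
      (10 * L * (j''.2 : ℝ) = 10 * L * (j'.2 : ℝ) ∧
      (10 * L * (j''.1 : ℝ) = 10 * L * (j'.1 : ℝ) + 10*L ∨
       10 * L * (j'.1 : ℝ) = 10 * L * (j''.1 : ℝ) + 10*L)) := by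
    rcases hcases with ⟨h1, h2 | h2⟩ | ⟨h1, h2 | h2⟩
    · exact Or.inl ⟨by exact_mod_cast congrArg (fun n : ℤ => 10 * L * (n : ℝ)) h1,
        Or.inl (by push_cast [h2]; ring)⟩
    · exact Or.inl ⟨by exact_mod_cast congrArg (fun n : ℤ => 10 * L * (n : ℝ)) h1,
        Or.inr (by push_cast [h2]; ring)⟩
    · exact Or.inr ⟨by exact_mod_cast congrArg (fun n : ℤ => 10 * L * (n : ℝ)) h1,
        Or.inl (by push_cast [h2]; ring)⟩
    · exact Or.inr ⟨by exact_mod_cast congrArg (fun n : ℤ => 10 * L * (n : ℝ)) h1,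
        Or.inr (by push_cast [h2]; ring)⟩
  have hA : ∀ w : Plane, |w 0 - x 0| < 5*L → |w 1 - x 1| < 5*L → w ∈ U := by
    intro w hw0 hw1
    rw [hU]
    exact my_claimA_real L _ _ _ _ (x 0) (x 1) (w 0) (w 1) v hL hadjR hv hv1 hx0' hx1' hw0 hw1
  have h5L : (0:ℝ) < 5*L := by positivity
  have hxU : x ∈ U := hA x (by rw [sub_self, abs_zero]; exact h5L)
    (by rw [sub_self, abs_zero]; exact h5L)
  obtain ⟨q, hqN, hq⟩ := hnear x hxU
  have hxp : dist x p ≤ 2*L := (hxc q hqN).trans hq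
  intro y hy
  by_contra hyU
  obtain ⟨z, w, hzC, hzU, hwU, hwz⟩ := my_escape hUc (my_cell_convex N p) hxc hy hxU hyU hL
  obtain ⟨q', hq'N, hq'⟩ := hnear z hzU
  have hzp : dist z p ≤ 2*L := (hzC q' hq'N).trans hq'
  have hwx : dist w x < 5*L := by
    calc dist w x ≤ dist w z + dist z p + dist p x := dist_triangle4 w z p x
      _ < L + 2*L + 2*L := by
          have hpx := dist_comm p x ▸ hxp
          linarith
      _ = 5*L := by ring
  exact hwU (hA w ((my_coord_dist_le w x 0).trans_lt hwx) ((my_coord_dist_le w x 1).trans_lt hwx))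


end
end
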